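/- Let n ≥ 3. For every regular n-gon with center c, circumradius R > 0 and orientation θ, and every point M in its plane with L = |M − c|, one has 3·(S_n^{(2)})² − 2·S_n^{(4)} = (R² − L²)²; in particular 3·(S_n^{(2)})² − 2·S_n^{(4)} ≥ 0, with equality if and only if L = R (i.e. M lies on the circumcircle). -/

import Mathlib

open Complex Real Finset

theorem three_S2_sq_sub_two_S4 (n : ℕ) (hn : 3 ≤ n)
    (c M : ℂ) (R θ : ℝ) (hR : 0 < R) (L : ℝ) (hL : L = ‖M - c‖)
    (S2 S4 : ℝ)
    (hS2 : S2 = (1 / n : ℝ) * ∑ k ∈ Finset.range n,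
        ‖M - (c + R * Complex.exp (Complex.I * ((2 * π * k / n + θ : ℝ) : ℂ)))‖ ^ 2)
    (hS4 : S4 = (1 / n : ℝ) * ∑ k ∈ Finset.range n,
        ‖M - (c + R * Complex.exp (Complex.I * ((2 * π * k / n + θ : ℝ) : ℂ)))‖ ^ 4) :
    3 * S2 ^ 2 - 2 * S4 = (R ^ 2 - L ^ 2) ^ 2
      ∧ 0 ≤ 3 * S2 ^ 2 - 2 * S4
      ∧ (3 * S2 ^ 2 - 2 * S4 = 0 ↔ L = R) := by
  have hn0 : n ≠ 0 := by omega
  have hnR : (n : ℝ) ≠ 0 := Nat.cast_ne_zero.mpr hn0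
  set w : ℂ := M - c with hw
  have hL2 : L ^ 2 = Complex.normSq w := by rw [hL, Complex.sq_norm]
  set ζ : ℂ := Complex.exp (2 * π * Complex.I / n) with hζ
  have hprim : IsPrimitiveRoot ζ n := Complex.isPrimitiveRoot_exp n hn0
  have hζ1 : ζ ≠ 1 := by
    intro h
    have h1 := (hprim.pow_eq_one_iff_dvd 1).mp (by simpa using h)
    have := Nat.le_of_dvd one_pos h1
    omega
  have hζ2 : ζ ^ 2 ≠ 1 := by
    intro h
    have h1 := (hprim.pow_eq_one_iff_dvd 2).mp h
    have := Nat.le_of_dvd (by norm_num) h1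
    omega
  have hsum1 : ∑ k ∈ Finset.range n, ζ ^ k = 0 := by
    rw [geom_sum_eq hζ1, hprim.pow_eq_one, sub_self, zero_div]
  have hsum2 : ∑ k ∈ Finset.range n, (ζ ^ 2) ^ k = 0 := by
    rw [geom_sum_eq hζ2]
    have : (ζ ^ 2) ^ n = 1 := by
      rw [← pow_mul, mul_comm, pow_mul, hprim.pow_eq_one, one_pow]
    rw [this, sub_self, zero_div]
  set u : ℂ := Complex.exp ((θ : ℂ) * Complex.I) with hu
  have hz : ∀ k : ℕ, Complex.exp (Complex.I * ((2 * π * k / n + θ : ℝ) : ℂ)) = u * ζ ^ k := by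
    intro k
    rw [hu, hζ, ← Complex.exp_nat_mul, ← Complex.exp_add]
    congr 1
    push_cast
    ring
  have hu1 : Complex.normSq u = 1 := by
    rw [← Complex.sq_norm, hu, Complex.norm_exp_ofReal_mul_I, one_pow]
  have hζn : Complex.normSq ζ = 1 := by
    rw [← Complex.sq_norm, hprim.norm'_eq_one hn0, one_pow]
  set s : ℂ := (starRingEnd ℂ) w * u with hs
  have hns : Complex.normSq s = Complex.normSq w := by
    rw [hs, Complex.normSq_mul, Complex.normSq_conj, hu1, mul_one]
  -- t k : real part
  have hd2 : ∀ k : ℕ,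
      ‖M - (c + R * Complex.exp (Complex.I * ((2 * π * k / n + θ : ℝ) : ℂ)))‖ ^ 2
        = Complex.normSq w + R ^ 2 - 2 * R * (s * ζ ^ k).re := by
    intro k
    rw [hz k, Complex.sq_norm]
    have h1 : M - (c + ↑R * (u * ζ ^ k)) = w - ↑R * (u * ζ ^ k) := by rw [hw]; ring
    rw [h1, Complex.normSq_sub]
    have h2 : Complex.normSq (↑R * (u * ζ ^ k)) = R ^ 2 := by
      rw [Complex.normSq_mul, Complex.normSq_mul, Complex.normSq_ofReal, hu1,
        map_pow, hζn, one_pow, one_mul, mul_one, sq]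
    rw [h2]
    have h3 : (w * (starRingEnd ℂ) (↑R * (u * ζ ^ k))).re = R * (s * ζ ^ k).re := by
      have key : w * (starRingEnd ℂ) (↑R * (u * ζ ^ k)) =
          (R : ℂ) * (starRingEnd ℂ) (s * ζ ^ k) := by
        rw [hs]
        simp only [map_mul, map_pow, Complex.conj_conj, Complex.conj_ofReal]
        ring
      rw [key, Complex.re_ofReal_mul, Complex.conj_re]
    rw [h3]; ring
  -- sum of (s ζ^k).re
  have hT1 : ∑ k ∈ Finset.range n, (s * ζ ^ k).re = 0 := by
    rw [← Complex.re_sum, ← Finset.mul_sum, hsum1, mul_zero, Complex.zero_re]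
  have hT2 : ∑ k ∈ Finset.range n, (s * ζ ^ k).re ^ 2 = n * Complex.normSq w / 2 := by
    have key : ∀ k : ℕ, (s * ζ ^ k).re ^ 2
        = (Complex.normSq w + ((s * ζ ^ k) ^ 2).re) / 2 := by
      intro k
      have h1 : Complex.normSq (s * ζ ^ k) = Complex.normSq w := by
        rw [Complex.normSq_mul, hns, map_pow, hζn, one_pow, mul_one]
      have h2 : ((s * ζ ^ k) ^ 2).re = (s * ζ ^ k).re ^ 2 - (s * ζ ^ k).im ^ 2 := by
        rw [sq, Complex.mul_re]; ring
      rw [h2, ← h1, Complex.normSq_apply]; ring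
    simp only [key]
    rw [← Finset.sum_div, Finset.sum_add_distrib]
    have h3 : ∑ k ∈ Finset.range n, ((s * ζ ^ k) ^ 2).re = 0 := by
      have : ∀ k : ℕ, ((s * ζ ^ k) ^ 2) = s ^ 2 * (ζ ^ 2) ^ k := by
        intro k; rw [mul_pow, ← pow_mul, ← pow_mul, mul_comm k 2]
      simp only [this]
      rw [← Complex.re_sum, ← Finset.mul_sum, hsum2, mul_zero, Complex.zero_re]
    rw [h3, Finset.sum_const, Finset.card_range, nsmul_eq_mul]
    ring
  -- compute S2 and S4
  have hS2' : S2 = Complex.normSq w + R ^ 2 := by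
    rw [hS2]
    simp only [hd2]
    rw [Finset.sum_sub_distrib, Finset.sum_const, Finset.card_range, ← Finset.mul_sum, hT1,
      nsmul_eq_mul]
    field_simp
    ring
  have hS4' : S4 = (Complex.normSq w + R ^ 2) ^ 2 + 2 * R ^ 2 * Complex.normSq w := by
    rw [hS4]
    have key : ∀ k : ℕ,
        ‖M - (c + R * Complex.exp (Complex.I * ((2 * π * k / n + θ : ℝ) : ℂ)))‖ ^ 4
          = ((Complex.normSq w + R ^ 2) ^ 2
              - 4 * R * (Complex.normSq w + R ^ 2) * (s * ζ ^ k).re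
              + 4 * R ^ 2 * (s * ζ ^ k).re ^ 2) := by
      intro k
      have : ‖M - (c + R * Complex.exp (Complex.I * ((2 * π * k / n + θ : ℝ) : ℂ)))‖ ^ 4
          = (‖M - (c + R * Complex.exp (Complex.I * ((2 * π * k / n + θ : ℝ) : ℂ)))‖ ^ 2) ^ 2 := by
        ring
      rw [this, hd2 k]; ring
    simp only [key]
    rw [Finset.sum_add_distrib, Finset.sum_sub_distrib, Finset.sum_const, Finset.card_range,
      ← Finset.mul_sum, ← Finset.mul_sum, hT1, hT2, nsmul_eq_mul]
    field_simp
    ring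
  have hmain : 3 * S2 ^ 2 - 2 * S4 = (R ^ 2 - L ^ 2) ^ 2 := by
    rw [hS2', hS4', hL2]; ring
  refine ⟨hmain, by rw [hmain]; positivity, ?_⟩
  rw [hmain]
  constructor
  · intro h
    have h2 : R ^ 2 = L ^ 2 := by
      have := pow_eq_zero_iff (n := 2) (by norm_num) |>.mp h
      linarith
    have hL0 : 0 ≤ L := by rw [hL]; exact norm_nonneg _
    nlinarith
  · intro h; rw [h]; ring
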